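/- Let p ∈ (1,∞) and let A = U + iV be an n×n complex matrix (U = Re A, V = Im A entrywise) such that the symmetric part U_s is positive definite. Then the following are equivalent: (1) Δ_p(A) ≥ 0; (2) ⟨Uα,α⟩ + ⟨Uβ,β⟩ + 2⟨𝒱_p(V)α,β⟩ ≥ 0 for all α, β ∈ ℝⁿ; (3) ‖𝒲_p(A)‖ ≤ 1. -/

import Mathlib

open scoped BigOperators ComplexConjugate Matrix

noncomputable section

namespace Paper

/-- The sesquilinear pairing `⟨z,w⟩ = ∑ j, z j * conj (w j)` on `ℂⁿ`. -/
def herm {n : ℕ} (z w : Fin n → ℂ) : ℂ := ∑ j, z j * conj (w j)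

/-- Euclidean norm of a complex vector, `|z| = √⟨z,z⟩`. -/
def cnorm {n : ℕ} (z : Fin n → ℂ) : ℝ := Real.sqrt (herm z z).re

/-- Componentwise complex conjugate of a vector. -/
def vconj {n : ℕ} (z : Fin n → ℂ) : Fin n → ℂ := fun j => conj (z j)

/-- The ℝ-linear map `𝒥_p(α + iβ) = α/p + iβ/q`, where `1/p + 1/q = 1`,
i.e. `1/q = 1 - 1/p`. -/
def Jmap {n : ℕ} (p : ℝ) (ξ : Fin n → ℂ) : Fin n → ℂ :=
  fun j => (((ξ j).re / p : ℝ) : ℂ) + Complex.I * (((ξ j).im * (1 - 1 / p) : ℝ) : ℂ)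

/-- `Δ_p(A) = 2 · min { Re⟨Aξ, 𝒥_p ξ⟩ : ξ ∈ ℂⁿ, |ξ| = 1 }`. -/
def Deltap {n : ℕ} (p : ℝ) (A : Matrix (Fin n) (Fin n) ℂ) : ℝ :=
  sInf {t : ℝ | ∃ ξ : Fin n → ℂ, cnorm ξ = 1 ∧
    t = 2 * (herm (A.mulVec ξ) (Jmap p ξ)).re}

/-- `Δ_r(A) = min { Re⟨Aξ,ξ⟩ − |1 − 2/r|·|⟨Aξ,ξ̄⟩| : |ξ| = 1 }`, the extension of
`Δ_p` to all `r > 0`. -/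
def DeltaGen {n : ℕ} (r : ℝ) (A : Matrix (Fin n) (Fin n) ℂ) : ℝ :=
  sInf {t : ℝ | ∃ ξ : Fin n → ℂ, cnorm ξ = 1 ∧
    t = (herm (A.mulVec ξ) ξ).re - |1 - 2 / r| * ‖herm (A.mulVec ξ) (vconj ξ)‖}

/-- Membership in the class `𝒜_{λ,Λ}`:
`Re⟨Aξ,ξ⟩ ≥ λ|ξ|²` and `|⟨Aξ,η⟩| ≤ Λ|ξ||η|`. -/
def memA {n : ℕ} (lam Lam : ℝ) (A : Matrix (Fin n) (Fin n) ℂ) : Prop :=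
  (∀ ξ : Fin n → ℂ, lam * cnorm ξ ^ 2 ≤ (herm (A.mulVec ξ) ξ).re) ∧
  (∀ ξ η : Fin n → ℂ, ‖herm (A.mulVec ξ) η‖ ≤ Lam * cnorm ξ * cnorm η)

/-- `λ_A = min { Re⟨Aξ,ξ⟩ : |ξ| = 1 }`. -/
def lamA {n : ℕ} (A : Matrix (Fin n) (Fin n) ℂ) : ℝ :=
  sInf {t : ℝ | ∃ ξ : Fin n → ℂ, cnorm ξ = 1 ∧ t = (herm (A.mulVec ξ) ξ).re}

/-- `Λ_A = max { |⟨Aξ,η⟩| : |ξ| = |η| = 1 }`. -/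
def LamA {n : ℕ} (A : Matrix (Fin n) (Fin n) ℂ) : ℝ :=
  sSup {t : ℝ | ∃ ξ η : Fin n → ℂ, cnorm ξ = 1 ∧ cnorm η = 1 ∧
    t = ‖herm (A.mulVec ξ) η‖}

/-- `μ(A) = inf { Re⟨Aξ,ξ⟩/|⟨Aξ,ξ̄⟩| : ⟨Aξ,ξ̄⟩ ≠ 0 }`. -/
def muA {n : ℕ} (A : Matrix (Fin n) (Fin n) ℂ) : ℝ :=
  sInf {t : ℝ | ∃ ξ : Fin n → ℂ, herm (A.mulVec ξ) (vconj ξ) ≠ 0 ∧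
    t = (herm (A.mulVec ξ) ξ).re / ‖herm (A.mulVec ξ) (vconj ξ)‖}

/-- Second real Fréchet derivative of `F : ℂ → ℝ` at `ζ`, as a bilinear expression. -/
def D2 (F : ℂ → ℝ) (ζ : ℂ) (ξ η : ℂ) : ℝ := fderiv ℝ (fderiv ℝ F) ζ ξ η

/-- `F : ℂ → ℝ` is twice real-Fréchet differentiable at `ζ`. -/
def TwiceDiffAt (F : ℂ → ℝ) (ζ : ℂ) : Prop :=
  DifferentiableAt ℝ F ζ ∧ DifferentiableAt ℝ (fderiv ℝ F) ζ

/-- `H_F^A[ζ;ξ] = ∑ j, D²F(ζ)[ξ_j, (Aξ)_j]`. -/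
def HFA {n : ℕ} (F : ℂ → ℝ) (A : Matrix (Fin n) (Fin n) ℂ) (ζ : ℂ) (ξ : Fin n → ℂ) : ℝ :=
  ∑ j, D2 F ζ (ξ j) (A.mulVec ξ j)

/-- The power function `F_r(ζ) = |ζ|^r`. -/
def Fpow (r : ℝ) (ζ : ℂ) : ℝ := ‖ζ‖ ^ r

/-- Real dot product. -/
def rdot {n : ℕ} (u v : Fin n → ℝ) : ℝ := ∑ j, u j * v j

/-- Euclidean norm of a real vector. -/
def enorm {n : ℕ} (u : Fin n → ℝ) : ℝ := Real.sqrt (∑ j, u j ^ 2)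

/-- Operator norm `‖M‖ = max { |Mu| : |u| = 1 }` of a real matrix. -/
def opnormR {n : ℕ} (M : Matrix (Fin n) (Fin n) ℝ) : ℝ :=
  sSup {t : ℝ | ∃ u : Fin n → ℝ, enorm u = 1 ∧ t = enorm (M.mulVec u)}

/-- Symmetric part `M_s = (M + Mᵀ)/2`. -/
def symPart {n : ℕ} {R : Type*} [Field R] (M : Matrix (Fin n) (Fin n) R) :
    Matrix (Fin n) (Fin n) R := (2 : R)⁻¹ • (M + Mᵀ)

/-- Antisymmetric part `M_a = (M − Mᵀ)/2`. -/
def antiPart {n : ℕ} {R : Type*} [Field R] (M : Matrix (Fin n) (Fin n) R) :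
    Matrix (Fin n) (Fin n) R := (2 : R)⁻¹ • (M - Mᵀ)

/-- `𝒱_p(V) = ((p−2)/(2√(p−1)))·V_s + (p/(2√(p−1)))·V_a`. -/
def Vmap {n : ℕ} (p : ℝ) (V : Matrix (Fin n) (Fin n) ℝ) : Matrix (Fin n) (Fin n) ℝ :=
  ((p - 2) / (2 * Real.sqrt (p - 1))) • symPart V + (p / (2 * Real.sqrt (p - 1))) • antiPart V

/-- A real matrix is (symmetric) positive definite. -/
def RPosDef {n : ℕ} (M : Matrix (Fin n) (Fin n) ℝ) : Prop :=
  Mᵀ = M ∧ ∀ u : Fin n → ℝ, u ≠ 0 → 0 < rdot (M.mulVec u) u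

/-- The complex matrix `U + iV` built from two real matrices. -/
def cplx {n : ℕ} (U V : Matrix (Fin n) (Fin n) ℝ) : Matrix (Fin n) (Fin n) ℂ :=
  Matrix.of fun i j => ((U i j : ℂ) + Complex.I * (V i j : ℂ))

/-- `Φ : ℂ×ℂ → ℝ` is twice real-Fréchet differentiable at `v`. -/
def TwiceDiffAt2 (Φ : ℂ × ℂ → ℝ) (v : ℂ × ℂ) : Prop :=
  DifferentiableAt ℝ Φ v ∧ DifferentiableAt ℝ (fderiv ℝ Φ) v

/-- `H_Φ^{(A,B)}[v;ω] = ∑ j, D²Φ(v)[(ω₁ⱼ, ω₂ⱼ), ((Aω₁)ⱼ, (Bω₂)ⱼ)]`. -/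
def HAB {n : ℕ} (Φ : ℂ × ℂ → ℝ) (A B : Matrix (Fin n) (Fin n) ℂ) (v : ℂ × ℂ)
    (ω₁ ω₂ : Fin n → ℂ) : ℝ :=
  ∑ j, fderiv ℝ (fderiv ℝ Φ) v (ω₁ j, ω₂ j) (A.mulVec ω₁ j, B.mulVec ω₂ j)

/-- The Nazarov–Treil Bellman function `Q_{p,δ}` (with `q = p/(p−1)` passed explicitly). -/
def QNT (p q δ : ℝ) (ζ η : ℂ) : ℝ :=
  ‖ζ‖ ^ p + ‖η‖ ^ q +
    δ * (if ‖ζ‖ ^ p ≤ ‖η‖ ^ q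
      then ‖ζ‖ ^ (2 : ℝ) * ‖η‖ ^ (2 - q)
      else (2 / p) * ‖ζ‖ ^ p + (2 / q - 1) * ‖η‖ ^ q)

/-- `Δ_p` of a matrix-valued function on a subset `Ω ⊆ ℝᵐ`:
`2 · essinf_{x∈Ω} min_{|ξ|=1} Re⟨A(x)ξ, 𝒥_p ξ⟩`. -/
def DeltapAE {m n : ℕ} (p : ℝ) (A : (Fin m → ℝ) → Matrix (Fin n) (Fin n) ℂ)
    (Ω : Set (Fin m → ℝ)) : ℝ :=
  2 * essInf (fun x => sInf {t : ℝ | ∃ ξ : Fin n → ℂ, cnorm ξ = 1 ∧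
      t = (herm ((A x).mulVec ξ) (Jmap p ξ)).re}) (MeasureTheory.volume.restrict Ω)

end Paper
namespace S5Aux
open Paper

variable {n : ℕ}

/-- build a complex vector from real and imaginary parts -/
def mk {n : ℕ} (α β : Fin n → ℝ) : Fin n → ℂ := fun j => (α j : ℂ) + (β j : ℂ) * Complex.I

@[simp] lemma mk_re (α β : Fin n → ℝ) (j : Fin n) : (mk α β j).re = α j := by simp [mk]
@[simp] lemma mk_im (α β : Fin n → ℝ) (j : Fin n) : (mk α β j).im = β j := by simp [mk]

lemma mk_re_im (ξ : Fin n → ℂ) : mk (fun j => (ξ j).re) (fun j => (ξ j).im) = ξ := by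
  funext j; simp [mk, Complex.re_add_im]

lemma rdot_mulVec (M : Matrix (Fin n) (Fin n) ℝ) (u v : Fin n → ℝ) :
    rdot (M.mulVec u) v = ∑ j, ∑ k, M j k * u k * v j := by
  simp [rdot, Matrix.mulVec, dotProduct, Finset.sum_mul]

lemma rdot_swap (M : Matrix (Fin n) (Fin n) ℝ) (u v : Fin n → ℝ) :
    rdot (M.mulVec u) v = rdot (Mᵀ.mulVec v) u := by
  rw [rdot_mulVec, rdot_mulVec, Finset.sum_comm]
  exact Finset.sum_congr rfl fun k _ => Finset.sum_congr rfl fun j _ => by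
    simp [Matrix.transpose_apply]; ring

lemma rdot_smul_smul (M : Matrix (Fin n) (Fin n) ℝ) (c d : ℝ) (u v : Fin n → ℝ) :
    rdot (M.mulVec (c • u)) (d • v) = (c * d) * rdot (M.mulVec u) v := by
  rw [rdot_mulVec, rdot_mulVec, Finset.mul_sum]
  refine Finset.sum_congr rfl fun j _ => ?_
  rw [Finset.mul_sum]
  refine Finset.sum_congr rfl fun k _ => ?_
  simp [smul_eq_mul]; ring

lemma rdot_self (u : Fin n → ℝ) : rdot u u = Paper.enorm u ^ 2 := by
  rw [Paper.enorm, Real.sq_sqrt (by positivity)]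
  simp [rdot, sq]

lemma rdot_symPart (M : Matrix (Fin n) (Fin n) ℝ) (u : Fin n → ℝ) :
    rdot ((symPart M).mulVec u) u = rdot (M.mulVec u) u := by
  rw [rdot_mulVec, rdot_mulVec]
  have h : (∑ j, ∑ k, M k j * u k * u j) = ∑ j, ∑ k, M j k * u k * u j := by
    rw [Finset.sum_comm]
    exact Finset.sum_congr rfl fun k _ => Finset.sum_congr rfl fun j _ => by ring
  calc (∑ j, ∑ k, (symPart M) j k * u k * u j)
      = ∑ j, ∑ k, ((2:ℝ)⁻¹ * (M j k * u k * u j) + (2:ℝ)⁻¹ * (M k j * u k * u j)) := by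
        refine Finset.sum_congr rfl fun j _ => Finset.sum_congr rfl fun k _ => ?_
        simp [symPart, Matrix.add_apply, Matrix.smul_apply, Matrix.transpose_apply, smul_eq_mul]
        ring
    _ = ∑ j, ∑ k, M j k * u k * u j := by
        simp only [Finset.sum_add_distrib, ← Finset.mul_sum]
        rw [h]; ring

end S5Aux
section Chunk2
open Paper S5Aux

variable {n : ℕ}

lemma cplx_mulVec_re (U V : Matrix (Fin n) (Fin n) ℝ) (α β : Fin n → ℝ) (j : Fin n) :
    ((cplx U V).mulVec (mk α β) j).re = U.mulVec α j - V.mulVec β j := by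
  simp only [Matrix.mulVec, dotProduct, Complex.re_sum]
  rw [← Finset.sum_sub_distrib]
  refine Finset.sum_congr rfl fun k _ => ?_
  simp [cplx, mk, Complex.mul_re]

lemma cplx_mulVec_im (U V : Matrix (Fin n) (Fin n) ℝ) (α β : Fin n → ℝ) (j : Fin n) :
    ((cplx U V).mulVec (mk α β) j).im = U.mulVec β j + V.mulVec α j := by
  simp only [Matrix.mulVec, dotProduct, Complex.im_sum]
  rw [Finset.sum_add_distrib.symm]
  refine Finset.sum_congr rfl fun k _ => ?_
  simp [cplx, mk, Complex.mul_im]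

lemma stage1 (p : ℝ) (hp : 1 < p) (U V : Matrix (Fin n) (Fin n) ℝ) (α β : Fin n → ℝ) :
    p * (2 * (herm ((cplx U V).mulVec (mk α β)) (Jmap p (mk α β))).re)
      = 2 * rdot (U.mulVec α) α + (2*p - 2) * rdot (U.mulVec β) β
        + 2 * ((p - 1) * rdot (V.mulVec α) β - rdot (V.mulVec β) α) := by
  have hp0 : p ≠ 0 := by linarith
  simp only [herm, Complex.re_sum, rdot]
  simp only [Finset.mul_sum, ← Finset.sum_add_distrib, ← Finset.sum_sub_distrib]
  refine Finset.sum_congr rfl fun j _ => ?_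
  have hre := cplx_mulVec_re U V α β j
  have him := cplx_mulVec_im U V α β j
  rw [Complex.mul_re]
  have hwre : ((Jmap p (mk α β)) j).re = α j / p := by simp [Jmap]
  have hwim : ((Jmap p (mk α β)) j).im = β j * (1 - 1/p) := by simp [Jmap]
  rw [Complex.conj_re, Complex.conj_im, hwre, hwim, hre, him]
  field_simp
  ring

lemma stage2 (p : ℝ) (hp : 1 < p) (V : Matrix (Fin n) (Fin n) ℝ) (α β : Fin n → ℝ) :
    Real.sqrt (p - 1) * (2 * rdot ((Vmap p V).mulVec α) β)
      = (p - 1) * rdot (V.mulVec α) β - rdot (V.mulVec β) α := by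
  have hs : (0:ℝ) < Real.sqrt (p - 1) := Real.sqrt_pos.mpr (by linarith)
  have hs0 : Real.sqrt (p - 1) ≠ 0 := ne_of_gt hs
  rw [rdot_swap V β α]
  simp only [rdot_mulVec]
  simp only [Finset.mul_sum, ← Finset.sum_sub_distrib]
  refine Finset.sum_congr rfl fun j _ => Finset.sum_congr rfl fun k _ => ?_
  simp only [Vmap, symPart, antiPart, Matrix.add_apply, Matrix.smul_apply,
    Matrix.transpose_apply, Matrix.sub_apply, smul_eq_mul]
  field_simp
  ring

lemma bridge (p : ℝ) (hp : 1 < p) (U V : Matrix (Fin n) (Fin n) ℝ) (α β : Fin n → ℝ) :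
    p * (2 * (herm ((cplx U V).mulVec (mk α β)) (Jmap p (mk α β))).re)
      = 2 * rdot (U.mulVec α) α + (2*p - 2) * rdot (U.mulVec β) β
        + 4 * Real.sqrt (p - 1) * rdot ((Vmap p V).mulVec α) β := by
  rw [stage1 p hp U V α β]
  have h2 := stage2 p hp V α β
  linear_combination (-2 : ℝ) * h2

end Chunk2
section Chunk3
open Paper S5Aux

variable {n : ℕ}

def Eval (p : ℝ) (U V : Matrix (Fin n) (Fin n) ℝ) (α β : Fin n → ℝ) : ℝ :=
  2 * (herm ((cplx U V).mulVec (mk α β)) (Jmap p (mk α β))).re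

def Fval (p : ℝ) (U V : Matrix (Fin n) (Fin n) ℝ) (α β : Fin n → ℝ) : ℝ :=
  rdot (U.mulVec α) α + rdot (U.mulVec β) β + 2 * rdot ((Vmap p V).mulVec α) β

lemma EF (p : ℝ) (hp : 1 < p) (U V : Matrix (Fin n) (Fin n) ℝ) (α β : Fin n → ℝ) :
    Eval p U V (Real.sqrt (p/2) • α) (Real.sqrt (p/(2*(p-1))) • β) = Fval p U V α β := by
  have hp0 : p ≠ 0 := by linarith
  have hp1 : (0:ℝ) < p - 1 := by linarith
  have hppos : (0:ℝ) < p := by linarith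
  apply mul_left_cancel₀ hp0
  simp only [Eval, Fval]
  rw [bridge p hp, rdot_smul_smul, rdot_smul_smul, rdot_smul_smul]
  have h1 : Real.sqrt (p/2) * Real.sqrt (p/2) = p / 2 := Real.mul_self_sqrt (by positivity)
  have h2 : Real.sqrt (p/(2*(p-1))) * Real.sqrt (p/(2*(p-1))) = p / (2*(p-1)) :=
    Real.mul_self_sqrt (by positivity)
  have h3 : Real.sqrt (p-1) * (Real.sqrt (p/2) * Real.sqrt (p/(2*(p-1)))) = p / 2 := by
    rw [← Real.sqrt_mul (by positivity), ← Real.sqrt_mul (by linarith)]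
    have : (p - 1) * (p / 2 * (p / (2 * (p - 1)))) = (p/2)^2 := by field_simp
    rw [this, Real.sqrt_sq (by positivity)]
  rw [h1, h2]
  rw [show (4:ℝ) * Real.sqrt (p-1) * (Real.sqrt (p/2) * Real.sqrt (p/(2*(p-1))) * rdot ((Vmap p V).mulVec α) β)
      = 4 * (Real.sqrt (p-1) * (Real.sqrt (p/2) * Real.sqrt (p/(2*(p-1))))) * rdot ((Vmap p V).mulVec α) β by ring,
    h3]
  field_simp
  ring

lemma Escale (p : ℝ) (hp : 1 < p) (U V : Matrix (Fin n) (Fin n) ℝ) (c : ℝ) (α β : Fin n → ℝ) :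
    Eval p U V (c • α) (c • β) = c^2 * Eval p U V α β := by
  have hp0 : p ≠ 0 := by linarith
  apply mul_left_cancel₀ hp0
  have h1 := bridge p hp U V (c • α) (c • β)
  have h2 := bridge p hp U V α β
  simp only [rdot_smul_smul] at h1
  simp only [Eval]
  linear_combination h1 - c^2 * h2

lemma herm_self_re (ξ : Fin n → ℂ) : (herm ξ ξ).re = ∑ j, ((ξ j).re^2 + (ξ j).im^2) := by
  simp only [herm, Complex.re_sum]
  refine Finset.sum_congr rfl fun j _ => ?_
  rw [Complex.mul_re, Complex.conj_re, Complex.conj_im]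
  ring

lemma cnorm_mk (α β : Fin n → ℝ) :
    cnorm (mk α β) = Real.sqrt (∑ j, (α j ^ 2 + β j ^ 2)) := by
  rw [cnorm, herm_self_re]
  simp only [mk_re, mk_im]

lemma deltap_bddBelow (p : ℝ) (hp : 1 < p) (A : Matrix (Fin n) (Fin n) ℂ) :
    BddBelow {t : ℝ | ∃ ξ : Fin n → ℂ, cnorm ξ = 1 ∧ t = 2 * (herm (A.mulVec ξ) (Jmap p ξ)).re} := by
  have hppos : (0:ℝ) < p := by linarith
  refine ⟨-(4 * ∑ j, ∑ k, ‖A j k‖), ?_⟩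
  rintro t ⟨ξ, hξ, rfl⟩
  have hsum : (∑ j, ((ξ j).re^2 + (ξ j).im^2)) = 1 := by
    rw [cnorm, herm_self_re] at hξ; exact Real.sqrt_eq_one.mp hξ
  have habs : ∀ k, ‖ξ k‖ ≤ 1 := by
    intro k
    have h1 : (ξ k).re^2 + (ξ k).im^2 ≤ 1 := by
      rw [← hsum]
      exact Finset.single_le_sum (f := fun j => (ξ j).re^2 + (ξ j).im^2)
        (fun j _ => by positivity) (Finset.mem_univ k)
    have h2 : ‖ξ k‖^2 = (ξ k).re^2 + (ξ k).im^2 := by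
      rw [Complex.sq_norm, Complex.normSq_apply]; ring
    nlinarith [norm_nonneg (ξ k)]
  have hJ : ∀ j, ‖Jmap p ξ j‖ ≤ 2 := by
    intro j
    have h1 : ‖Jmap p ξ j‖ ≤ |(ξ j).re / p| + |(ξ j).im * (1 - 1/p)| := by
      refine le_trans (norm_add_le _ _) (le_of_eq ?_)
      simp only [norm_mul, Complex.norm_I, one_mul, Complex.norm_real, Real.norm_eq_abs, abs_mul]
    have hre : |(ξ j).re| ≤ 1 := le_trans (Complex.abs_re_le_norm _) (habs j)
    have him : |(ξ j).im| ≤ 1 := le_trans (Complex.abs_im_le_norm _) (habs j)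
    have e1 : |(ξ j).re / p| ≤ 1 := by
      rw [abs_div, abs_of_pos hppos, div_le_one hppos]
      linarith
    have e2 : |(ξ j).im * (1 - 1/p)| ≤ 1 := by
      rw [abs_mul]
      have : |1 - 1/p| ≤ 1 := by
        rw [abs_of_nonneg (by rw [sub_nonneg]; rw [div_le_one hppos]; linarith)]
        have : (0:ℝ) < 1/p := by positivity
        linarith
      exact mul_le_one₀ him (abs_nonneg _) this
    linarith
  have hzb : ∀ j, ‖A.mulVec ξ j‖ ≤ ∑ k, ‖A j k‖ := by
    intro j
    simp only [Matrix.mulVec, dotProduct]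
    refine le_trans (norm_sum_le _ _) (Finset.sum_le_sum fun k _ => ?_)
    rw [norm_mul]
    exact mul_le_of_le_one_right (norm_nonneg _) (habs k)
  have hherm : ‖herm (A.mulVec ξ) (Jmap p ξ)‖ ≤ ∑ j, (∑ k, ‖A j k‖) * 2 := by
    rw [herm]
    refine le_trans (norm_sum_le _ _) (Finset.sum_le_sum fun j _ => ?_)
    rw [norm_mul, Complex.norm_conj]
    exact mul_le_mul (hzb j) (hJ j) (norm_nonneg _)
      (Finset.sum_nonneg fun k _ => norm_nonneg _)
  have hb : (∑ j, (∑ k, ‖A j k‖) * 2) = 2 * ∑ j, ∑ k, ‖A j k‖ := by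
    rw [← Finset.sum_mul, mul_comm]
  have h5 : ‖herm (A.mulVec ξ) (Jmap p ξ)‖ ≤ 2 * ∑ j, ∑ k, ‖A j k‖ :=
    hb ▸ hherm
  have h6 := Complex.abs_re_le_norm (herm (A.mulVec ξ) (Jmap p ξ))
  have h7 := neg_abs_le ((herm (A.mulVec ξ) (Jmap p ξ)).re)
  linarith

end Chunk3
section Chunk4
open Paper S5Aux

variable {n : ℕ}

lemma two_implies_one (p : ℝ) (hp : 1 < p) (U V : Matrix (Fin n) (Fin n) ℝ)
    (h2 : ∀ α β : Fin n → ℝ, 0 ≤ Fval p U V α β) :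
    0 ≤ Deltap p (cplx U V) := by
  have hs1 : Real.sqrt (p/2) ≠ 0 := ne_of_gt (Real.sqrt_pos.mpr (by linarith))
  have ht1 : Real.sqrt (p/(2*(p-1))) ≠ 0 := by
    refine ne_of_gt (Real.sqrt_pos.mpr ?_)
    have : (0:ℝ) < p - 1 := by linarith
    positivity
  apply Real.sInf_nonneg
  rintro t ⟨ξ, hξ, rfl⟩
  have hdec : ξ = mk (fun j => (ξ j).re) (fun j => (ξ j).im) := (mk_re_im ξ).symm
  set α := fun j => (ξ j).re
  set β := fun j => (ξ j).im
  have : 2 * (herm ((cplx U V).mulVec ξ) (Jmap p ξ)).re = Eval p U V α β := by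
    rw [hdec]; rfl
  rw [this]
  have heq : Eval p U V α β
      = Fval p U V ((Real.sqrt (p/2))⁻¹ • α) ((Real.sqrt (p/(2*(p-1))))⁻¹ • β) := by
    rw [← EF p hp U V]
    rw [smul_smul, smul_smul, mul_inv_cancel₀ hs1, mul_inv_cancel₀ ht1, one_smul, one_smul]
  rw [heq]
  exact h2 _ _

lemma one_implies_two (p : ℝ) (hp : 1 < p) (U V : Matrix (Fin n) (Fin n) ℝ)
    (h1 : 0 ≤ Deltap p (cplx U V)) :
    ∀ α β : Fin n → ℝ, 0 ≤ Fval p U V α β := by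
  by_contra hcon
  push_neg at hcon
  obtain ⟨α, β, hneg⟩ := hcon
  set a := Real.sqrt (p/2) • α with ha
  set b := Real.sqrt (p/(2*(p-1))) • β with hb
  have hEab : Eval p U V a b = Fval p U V α β := EF p hp U V α β
  set N := ∑ j, (a j ^ 2 + b j ^ 2) with hN
  have hN0 : 0 ≤ N := Finset.sum_nonneg fun j _ => by positivity
  rcases eq_or_lt_of_le hN0 with hNz | hNpos
  · -- N = 0 : a = 0, b = 0, so Eval a b = 0, contradicting Eval a b = Fval < 0
    have hzero : ∀ j ∈ Finset.univ, (a j ^ 2 + b j ^ 2 : ℝ) = 0 := by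
      have := (Finset.sum_eq_zero_iff_of_nonneg (fun j _ => by positivity)).mp hNz.symm
      exact this
    have haz : a = 0 := by
      funext j
      have := hzero j (Finset.mem_univ j)
      have h1 : a j ^ 2 = 0 := by nlinarith [sq_nonneg (a j), sq_nonneg (b j)]
      exact pow_eq_zero_iff (by norm_num) |>.mp h1
    have hbz : b = 0 := by
      funext j
      have := hzero j (Finset.mem_univ j)
      have h1 : b j ^ 2 = 0 := by nlinarith [sq_nonneg (a j), sq_nonneg (b j)]
      exact pow_eq_zero_iff (by norm_num) |>.mp h1
    have hE0 : Eval p U V a b = 0 := by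
      rw [haz, hbz]
      have := Escale p hp U V 0 0 0
      simpa using this
    rw [hE0] at hEab
    linarith
  · set r := Real.sqrt N with hr
    have hrpos : 0 < r := Real.sqrt_pos.mpr hNpos
    have hrr : r * r = N := Real.mul_self_sqrt (le_of_lt hNpos)
    have hcn : cnorm (mk (r⁻¹ • a) (r⁻¹ • b)) = 1 := by
      rw [cnorm_mk]
      have : (∑ j, ((r⁻¹ • a) j ^ 2 + (r⁻¹ • b) j ^ 2)) = 1 := by
        have : (∑ j, ((r⁻¹ • a) j ^ 2 + (r⁻¹ • b) j ^ 2))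
            = r⁻¹^2 * ∑ j, (a j ^ 2 + b j ^ 2) := by
          rw [Finset.mul_sum]
          refine Finset.sum_congr rfl fun j _ => ?_
          simp [Pi.smul_apply, smul_eq_mul]
          ring
        rw [this, ← hN]
        field_simp
        nlinarith [hrr]
      rw [this, Real.sqrt_one]
    have hEscaled : Eval p U V (r⁻¹ • a) (r⁻¹ • b) < 0 := by
      rw [Escale p hp U V r⁻¹ a b, hEab]
      exact mul_neg_of_pos_of_neg (by positivity) hneg
    have hmem : Eval p U V (r⁻¹ • a) (r⁻¹ • b) ∈
        {t : ℝ | ∃ ξ : Fin n → ℂ, cnorm ξ = 1 ∧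
          t = 2 * (herm ((cplx U V).mulVec ξ) (Jmap p (ξ))).re} :=
      ⟨mk (r⁻¹ • a) (r⁻¹ • b), hcn, rfl⟩
    have := csInf_le (deltap_bddBelow p hp (cplx U V)) hmem
    have hD : Deltap p (cplx U V) ≤ Eval p U V (r⁻¹ • a) (r⁻¹ • b) := this
    linarith

end Chunk4
section Chunk5
open Paper S5Aux

variable {n : ℕ}

lemma rdot_smul_right (u : Fin n → ℝ) (c : ℝ) (v : Fin n → ℝ) :
    rdot u (c • v) = c * rdot u v := by
  simp only [rdot, Pi.smul_apply, smul_eq_mul, Finset.mul_sum]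
  exact Finset.sum_congr rfl fun j _ => by ring

lemma rdot_abs_le (u v : Fin n → ℝ) : |rdot u v| ≤ Paper.enorm u * Paper.enorm v := by
  have h := Finset.sum_mul_sq_le_sq_mul_sq Finset.univ u v
  rw [← Real.sqrt_sq_eq_abs, rdot, Paper.enorm, Paper.enorm,
    ← Real.sqrt_mul (Finset.sum_nonneg fun j _ => sq_nonneg _)]
  exact Real.sqrt_le_sqrt h

lemma enorm_nonneg (u : Fin n → ℝ) : 0 ≤ Paper.enorm u := Real.sqrt_nonneg _

lemma penorm_pos {u : Fin n → ℝ} (hu : u ≠ 0) : 0 < Paper.enorm u := by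
  rw [Paper.enorm]
  apply Real.sqrt_pos.mpr
  rcases lt_or_eq_of_le (Finset.sum_nonneg (fun j _ => sq_nonneg (u j))) with h | h
  · exact h
  · exfalso
    apply hu
    funext j
    have := (Finset.sum_eq_zero_iff_of_nonneg (fun j _ => sq_nonneg (u j))).mp h.symm
    have := this j (Finset.mem_univ j)
    exact pow_eq_zero_iff (by norm_num) |>.mp this

lemma penorm_smul (c : ℝ) (u : Fin n → ℝ) : Paper.enorm (c • u) = |c| * Paper.enorm u := by
  rw [Paper.enorm, Paper.enorm]
  have : (∑ j, (c • u) j ^ 2) = c^2 * ∑ j, u j ^ 2 := by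
    rw [Finset.mul_sum]
    exact Finset.sum_congr rfl fun j _ => by simp [Pi.smul_apply, smul_eq_mul]; ring
  rw [this, Real.sqrt_mul (sq_nonneg c), Real.sqrt_sq_eq_abs]

lemma opnorm_bddAbove (M : Matrix (Fin n) (Fin n) ℝ) :
    BddAbove {t : ℝ | ∃ u : Fin n → ℝ, Paper.enorm u = 1 ∧ t = Paper.enorm (M.mulVec u)} := by
  refine ⟨Real.sqrt (∑ j, (∑ k, |M j k|)^2), ?_⟩
  rintro t ⟨u, hu, rfl⟩
  have hsum : (∑ j, u j ^ 2) = 1 := Real.sqrt_eq_one.mp hu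
  have habs : ∀ k, |u k| ≤ 1 := by
    intro k
    have h1 : u k ^ 2 ≤ 1 := by
      rw [← hsum]
      exact Finset.single_le_sum (f := fun j => u j ^ 2) (fun j _ => sq_nonneg _)
        (Finset.mem_univ k)
    nlinarith [abs_nonneg (u k), sq_abs (u k)]
  rw [Paper.enorm]
  apply Real.sqrt_le_sqrt
  refine Finset.sum_le_sum fun j _ => ?_
  have hb : (0:ℝ) ≤ ∑ k, |M j k| := Finset.sum_nonneg fun k _ => abs_nonneg _
  have h1 : |M.mulVec u j| ≤ ∑ k, |M j k| := by
    simp only [Matrix.mulVec, dotProduct]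
    refine le_trans (Finset.abs_sum_le_sum_abs _ _) (Finset.sum_le_sum fun k _ => ?_)
    rw [abs_mul]
    exact mul_le_of_le_one_right (abs_nonneg _) (habs k)
  calc M.mulVec u j ^ 2 = |M.mulVec u j| ^ 2 := (sq_abs _).symm
    _ ≤ (∑ k, |M j k|)^2 := by nlinarith [abs_nonneg (M.mulVec u j)]

lemma opnorm_le_apply (M : Matrix (Fin n) (Fin n) ℝ) (h : opnormR M ≤ 1) (v : Fin n → ℝ) :
    Paper.enorm (M.mulVec v) ≤ Paper.enorm v := by
  by_cases hv : v = 0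
  · subst hv
    simp [Matrix.mulVec_zero]
  · have hr : 0 < Paper.enorm v := penorm_pos hv
    set r := Paper.enorm v with hrdef
    have hu : Paper.enorm (r⁻¹ • v) = 1 := by
      rw [penorm_smul, abs_of_pos (by positivity)]
      field_simp
      exact hrdef.symm
    have hmem : Paper.enorm (M.mulVec (r⁻¹ • v)) ∈
        {t : ℝ | ∃ u : Fin n → ℝ, Paper.enorm u = 1 ∧ t = Paper.enorm (M.mulVec u)} :=
      ⟨r⁻¹ • v, hu, rfl⟩
    have h1 : Paper.enorm (M.mulVec (r⁻¹ • v)) ≤ 1 :=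
      le_trans (le_csSup (opnorm_bddAbove M) hmem) h
    rw [Matrix.mulVec_smul, penorm_smul, abs_of_pos (by positivity)] at h1
    calc Paper.enorm (M.mulVec v) = r * (r⁻¹ * Paper.enorm (M.mulVec v)) := by field_simp
      _ ≤ r * 1 := by
          exact mul_le_mul_of_nonneg_left h1 (le_of_lt hr)
      _ = Paper.enorm v := by rw [mul_one]

lemma dot_rdot (M : Matrix (Fin n) (Fin n) ℝ) (x : Fin n → ℝ) :
    dotProduct (star x) (M.mulVec x) = rdot (M.mulVec x) x := by
  simp only [dotProduct, rdot, Pi.star_apply, star_trivial]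
  exact Finset.sum_congr rfl fun j _ => by ring

lemma RPosDef_posDef {S : Matrix (Fin n) (Fin n) ℝ} (hS : RPosDef S) : S.PosDef := by
  refine Matrix.PosDef.of_dotProduct_mulVec_pos ?_ ?_
  · rw [Matrix.IsHermitian]
    rw [show Sᴴ = Sᵀ from rfl]
    exact hS.1
  · intro x hx
    rw [dot_rdot]
    exact hS.2 x hx

lemma mulVec_inv_cancel {S : Matrix (Fin n) (Fin n) ℝ} (h : IsUnit S.det) (v : Fin n → ℝ) :
    S.mulVec (S⁻¹.mulVec v) = v := by
  rw [Matrix.mulVec_mulVec, Matrix.mul_nonsing_inv _ h, Matrix.one_mulVec]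

lemma inv_mulVec_cancel {S : Matrix (Fin n) (Fin n) ℝ} (h : IsUnit S.det) (v : Fin n → ℝ) :
    S⁻¹.mulVec (S.mulVec v) = v := by
  rw [Matrix.mulVec_mulVec, Matrix.nonsing_inv_mul _ h, Matrix.one_mulVec]

lemma quadU (U S : Matrix (Fin n) (Fin n) ℝ) (hSt : Sᵀ = S) (hSS : S * S = symPart U)
    (x : Fin n → ℝ) :
    rdot (U.mulVec x) x = rdot (S.mulVec x) (S.mulVec x) := by
  rw [← rdot_symPart, ← hSS, ← Matrix.mulVec_mulVec, rdot_swap, hSt]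

lemma SW_eq (𝒱 S : Matrix (Fin n) (Fin n) ℝ) (h : IsUnit S.det) :
    S * (S⁻¹ * 𝒱 * S⁻¹) = 𝒱 * S⁻¹ := by
  rw [Matrix.mul_assoc S⁻¹ 𝒱 S⁻¹, ← Matrix.mul_assoc S,
    Matrix.mul_nonsing_inv _ h, Matrix.one_mul]

end Chunk5
section Chunk6
open Paper S5Aux

variable {n : ℕ}

lemma two_implies_three (p : ℝ) (hp : 1 < p) (U V : Matrix (Fin n) (Fin n) ℝ)
    (h2 : ∀ α β : Fin n → ℝ, 0 ≤ Fval p U V α β) :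
    ∀ S : Matrix (Fin n) (Fin n) ℝ, RPosDef S → S * S = symPart U →
      opnormR (S⁻¹ * Vmap p V * S⁻¹) ≤ 1 := by
  intro S hS hSS
  have hpd := RPosDef_posDef hS
  have hdet : IsUnit S.det := (Matrix.isUnit_iff_isUnit_det S).mp hpd.isUnit
  have hSt : Sᵀ = S := hS.1
  apply Real.sSup_le _ zero_le_one
  rintro t ⟨u, hu, rfl⟩
  set W := S⁻¹ * Vmap p V * S⁻¹ with hW
  set a := W.mulVec u with hadef
  set α := S⁻¹.mulVec u with hα
  have hSα : S.mulVec α = u := mulVec_inv_cancel hdet u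
  have hVα : (Vmap p V).mulVec α = S.mulVec a := by
    conv_rhs => rw [hadef, Matrix.mulVec_mulVec, hW, SW_eq (Vmap p V) S hdet,
      ← Matrix.mulVec_mulVec]
  have key := h2 α ((-1 : ℝ) • (S⁻¹.mulVec a))
  have e1 : rdot (U.mulVec α) α = 1 := by
    rw [quadU U S hSt hSS, hSα, rdot_self, hu]; norm_num
  have e2 : rdot (U.mulVec ((-1:ℝ) • (S⁻¹.mulVec a))) ((-1:ℝ) • (S⁻¹.mulVec a))
      = rdot a a := by
    rw [rdot_smul_smul, quadU U S hSt hSS, mulVec_inv_cancel hdet]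
    ring
  have e3 : rdot ((Vmap p V).mulVec α) ((-1:ℝ) • (S⁻¹.mulVec a)) = -(rdot a a) := by
    rw [rdot_smul_right, hVα, rdot_swap, hSt, mulVec_inv_cancel hdet]
    ring
  rw [show Fval p U V α ((-1:ℝ) • (S⁻¹.mulVec a))
      = rdot (U.mulVec α) α + rdot (U.mulVec ((-1:ℝ) • (S⁻¹.mulVec a))) ((-1:ℝ) • (S⁻¹.mulVec a))
        + 2 * rdot ((Vmap p V).mulVec α) ((-1:ℝ) • (S⁻¹.mulVec a)) from rfl,
    e1, e2, e3] at key
  have hsq : rdot a a ≤ 1 := by linarith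
  rw [rdot_self] at hsq
  nlinarith [enorm_nonneg a]

open scoped MatrixOrder in
lemma three_implies_two (p : ℝ) (hp : 1 < p) (U V : Matrix (Fin n) (Fin n) ℝ)
    (hUs : ∀ α : Fin n → ℝ, α ≠ 0 → 0 < rdot ((symPart U).mulVec α) α)
    (h3 : ∀ S : Matrix (Fin n) (Fin n) ℝ, RPosDef S → S * S = symPart U →
      opnormR (S⁻¹ * Vmap p V * S⁻¹) ≤ 1) :
    ∀ α β : Fin n → ℝ, 0 ≤ Fval p U V α β := by
  have hUsym : (symPart U)ᵀ = symPart U := by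
    rw [symPart, Matrix.transpose_smul, Matrix.transpose_add, Matrix.transpose_transpose,
      add_comm]
  have hpd : (symPart U).PosDef := by
    refine Matrix.PosDef.of_dotProduct_mulVec_pos ?_ (fun x hx => ?_)
    · show (symPart U)ᴴ = symPart U
      exact hUsym
    · rw [dot_rdot]; exact hUs x hx
  have hpsd := hpd.posSemidef
  set S := CFC.sqrt (symPart U) with hSdef
  have hS2 : S * S = symPart U := CFC.sqrt_mul_sqrt_self (symPart U) hpsd.nonneg
  have hSpsd : S.PosSemidef := Matrix.nonneg_iff_posSemidef.mp (CFC.sqrt_nonneg (symPart U))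
  have hSt : Sᵀ = S := by rw [show Sᵀ = Sᴴ from rfl]; exact hSpsd.1
  have hdet : IsUnit S.det := by
    have hd : S.det * S.det = (symPart U).det := by rw [← Matrix.det_mul, hS2]
    have hpos := hpd.det_pos
    refine isUnit_iff_ne_zero.mpr fun h0 => ?_
    rw [h0, zero_mul] at hd
    rw [← hd] at hpos
    exact lt_irrefl _ hpos
  have hSpd : S.PosDef := by
    refine Matrix.PosDef.of_dotProduct_mulVec_pos hSpsd.1 (fun x hx => ?_)
    rcases lt_or_eq_of_le (hSpsd.dotProduct_mulVec_nonneg x) with h | h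
    · exact h
    · exfalso
      have h0 : S.mulVec x = 0 := (hSpsd.dotProduct_mulVec_zero_iff x).mp h.symm
      have hinj : Function.Injective S.mulVec :=
        Matrix.mulVec_injective_iff_isUnit.mpr ((Matrix.isUnit_iff_isUnit_det S).mpr hdet)
      exact hx (hinj (by rw [h0, Matrix.mulVec_zero]))
  have hRS : RPosDef S := by
    refine ⟨hSt, fun u hu => ?_⟩
    have := hSpd.dotProduct_mulVec_pos hu
    rwa [dot_rdot] at this
  have hop := h3 S hRS hS2
  intro α β
  set W := S⁻¹ * Vmap p V * S⁻¹ with hW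
  set a := S.mulVec α with ha
  set b := S.mulVec β with hb
  have hVα : (Vmap p V).mulVec α = S.mulVec (W.mulVec a) := by
    conv_rhs => rw [Matrix.mulVec_mulVec, hW, SW_eq (Vmap p V) S hdet,
      ← Matrix.mulVec_mulVec, ha, inv_mulVec_cancel hdet]
  have e1 : rdot (U.mulVec α) α = Paper.enorm a ^ 2 := by
    rw [quadU U S hSt hS2, ← ha, rdot_self]
  have e2 : rdot (U.mulVec β) β = Paper.enorm b ^ 2 := by
    rw [quadU U S hSt hS2, ← hb, rdot_self]
  have e3 : rdot ((Vmap p V).mulVec α) β = rdot b (W.mulVec a) := by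
    rw [hVα, rdot_swap, hSt, ← hb]
  have hcs : |rdot b (W.mulVec a)| ≤ Paper.enorm b * Paper.enorm (W.mulVec a) := rdot_abs_le _ _
  have hWa : Paper.enorm (W.mulVec a) ≤ Paper.enorm a := opnorm_le_apply W hop a
  have hge : -(Paper.enorm b * Paper.enorm a) ≤ rdot b (W.mulVec a) := by
    have h4 : Paper.enorm b * Paper.enorm (W.mulVec a) ≤ Paper.enorm b * Paper.enorm a :=
      mul_le_mul_of_nonneg_left hWa (enorm_nonneg b)
    have h5 := neg_abs_le (rdot b (W.mulVec a))
    have h6 := abs_le.mp hcs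
    linarith [h6.1, h6.2]
  rw [show Fval p U V α β
      = rdot (U.mulVec α) α + rdot (U.mulVec β) β + 2 * rdot ((Vmap p V).mulVec α) β from rfl,
    e1, e2, e3]
  nlinarith [sq_nonneg (Paper.enorm a - Paper.enorm b), hge]

end Chunk6
/-- for `A = U + iV` with `U_s` positive definite, the following are
equivalent: (1) `Δ_p(A) ≥ 0`; (2) `⟨Uα,α⟩ + ⟨Uβ,β⟩ + 2⟨𝒱_p(V)α,β⟩ ≥ 0` for all `α,β`;
(3) `‖𝒲_p(A)‖ ≤ 1` (where `𝒲_p(A) = S⁻¹𝒱_p(V)S⁻¹`, `S` the positive-definite square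
root of `U_s`). -/
theorem statement5 (n : ℕ) (p : ℝ) (hp : 1 < p)
    (U V : Matrix (Fin n) (Fin n) ℝ)
    (hUs : ∀ α : Fin n → ℝ, α ≠ 0 → 0 < Paper.rdot ((Paper.symPart U).mulVec α) α) :
    List.TFAE [
      0 ≤ Paper.Deltap p (Paper.cplx U V),
      ∀ α β : Fin n → ℝ,
        0 ≤ Paper.rdot (U.mulVec α) α + Paper.rdot (U.mulVec β) β
            + 2 * Paper.rdot ((Paper.Vmap p V).mulVec α) β,
      ∀ S : Matrix (Fin n) (Fin n) ℝ, Paper.RPosDef S → S * S = Paper.symPart U →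
        Paper.opnormR (S⁻¹ * Paper.Vmap p V * S⁻¹) ≤ 1 ] := by
  tfae_have 1 → 2 := fun h1 α β => one_implies_two p hp U V h1 α β
  tfae_have 2 → 1 := fun h2 => two_implies_one p hp U V h2
  tfae_have 2 → 3 := fun h2 => two_implies_three p hp U V h2
  tfae_have 3 → 2 := fun h3 => three_implies_two p hp U V hUs h3
  tfae_finish
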